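/- Let f be a nonconstant polynomial in two variables with complex coefficients. Then every connected component of the zero set Z(f) = {(x,y) ∈ ℂ² : f(x,y) = 0} is an unbounded subset of ℂ². -/

import Mathlib

open Set Metric Filter

lemma aux_diff (f : MvPolynomial (Fin 2) ℂ) :
    Differentiable ℂ (fun q : ℂ × ℂ =>
      MvPolynomial.eval (fun i : Fin 2 => if i = 0 then q.1 else q.2) f) := by
  induction f using MvPolynomial.induction_on with
  | C a => simp only [MvPolynomial.eval_C]; exact differentiable_const a
  | add p q hp hq => simp only [MvPolynomial.eval_add]; exact hp.add hq
  | mul_X p i hp =>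
      simp only [MvPolynomial.eval_mul, MvPolynomial.eval_X]
      exact hp.mul (by split_ifs <;> [exact differentiable_fst; exact differentiable_snd])

lemma aux_clopen {X : Type*} [TopologicalSpace X] [CompactSpace X] [T2Space X]
    (x : X) {U : Set X} (hU : IsOpen U) (h : connectedComponent x ⊆ U) :
    ∃ C : Set X, IsClopen C ∧ x ∈ C ∧ C ⊆ U := by
  have hK := connectedComponent_eq_iInter_isClopen x
  have hcl : ∀ s : { s : Set X // IsClopen s ∧ x ∈ s }, IsClosed (s : Set X) :=
    fun s => s.2.1.1
  have hempty : Uᶜ ∩ ⋂ s : { s : Set X // IsClopen s ∧ x ∈ s }, (s : Set X) = ∅ := by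
    rw [← hK, Set.eq_empty_iff_forall_notMem]
    intro z hz
    exact hz.1 (h hz.2)
  obtain ⟨u, hu⟩ := (hU.isClosed_compl.isCompact).elim_finite_subfamily_closed _ hcl hempty
  refine ⟨⋂ s ∈ u, (s : Set X), isClopen_biInter_finset fun s _ => s.2.1, ?_, ?_⟩
  · exact Set.mem_iInter₂.2 fun s _ => s.2.2
  · intro z hz
    by_contra hzU
    exact Set.eq_empty_iff_forall_notMem.1 hu z ⟨hzU, hz⟩

lemma aux_relclopen {L C Z O : Set (ℂ × ℂ)} (hL : IsPreconnected L) (hLZ : L ⊆ Z)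
    (hO : IsOpen O) (hCO : C = Z ∩ O) (hCc : IsClosed C) (hne : (L ∩ C).Nonempty) :
    L ⊆ C := by
  subst hCO
  by_contra hsub
  obtain ⟨w, hwL, hwC⟩ : ∃ w, w ∈ L ∧ w ∉ Z ∩ O := by
    simpa [Set.subset_def] using hsub
  obtain ⟨z, hz⟩ := hL O (Z ∩ O)ᶜ hO hCc.isOpen_compl
    (fun y hy => by
      by_cases hyC : y ∈ Z ∩ O
      · exact Or.inl hyC.2
      · exact Or.inr hyC)
    ⟨hne.choose, hne.choose_spec.1, hne.choose_spec.2.2⟩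
    ⟨w, hwL, hwC⟩
  exact hz.2.2 ⟨hLZ hz.1, hz.2.1⟩

lemma aux_key {F : ℂ × ℂ → ℂ} (hF : Differentiable ℂ F) {x₀ y₀ y₁ : ℂ}
    (h0 : F (x₀, y₀) = 0) (h1 : F (x₀, y₁) ≠ 0) {V : Set (ℂ × ℂ)} (hV : IsOpen V)
    (hmem : (x₀, y₀) ∈ V) :
    ∀ᶠ x in nhds x₀, ∃ y : ℂ, (x, y) ∈ V ∧ F (x, y) = 0 := by
  -- the slice at x₀
  set g : ℂ → ℂ := fun y => F (x₀, y) with hg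
  have hgd : Differentiable ℂ g := hF.comp ((differentiable_const x₀).prodMk differentiable_id)
  have hga : AnalyticAt ℂ g y₀ := (hgd.analyticAt y₀)
  -- isolated zeros
  have hiso : ∀ᶠ y in nhdsWithin y₀ {y₀}ᶜ, g y ≠ 0 := by
    rcases hga.eventually_eq_zero_or_eventually_ne_zero with h | h
    · exfalso
      apply h1
      have := (Complex.analyticOnNhd_univ_iff_differentiable.2 hgd).eqOn_zero_of_preconnected_of_eventuallyEq_zero
        isPreconnected_univ (Set.mem_univ y₀) h
      simpa using this (Set.mem_univ y₁)
    · exact h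
  rw [eventually_nhdsWithin_iff, Metric.eventually_nhds_iff] at hiso
  obtain ⟨r₀, hr₀, hiso⟩ := hiso
  obtain ⟨ε, hε, hball⟩ := Metric.isOpen_iff.1 hV _ hmem
  set r : ℝ := min (r₀ / 2) (ε / 2) with hrdef
  have hr : 0 < r := lt_min (by linarith) (by linarith)
  have hrr₀ : r < r₀ := lt_of_le_of_lt (min_le_left _ _) (by linarith)
  have hrε : r < ε := lt_of_le_of_lt (min_le_right _ _) (by linarith)
  -- min on sphere
  obtain ⟨ym, hym, hymmin⟩ := (isCompact_sphere y₀ r).exists_isMinOn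
    (NormedSpace.sphere_nonempty.mpr hr.le) (continuous_norm.comp hgd.continuous).continuousOn
  set m : ℝ := ‖g ym‖ with hm
  have hm0 : 0 < m := by
    have : g ym ≠ 0 := by
      apply hiso
      · rw [mem_sphere_iff_norm] at hym
        simpa [dist_eq_norm, hym] using hrr₀
      · simp only [Set.mem_compl_iff, Set.mem_singleton_iff]
        intro h
        rw [h, mem_sphere_iff_norm] at hym
        simp at hym
        exact hr.ne' hym.symm
    simpa [hm] using norm_pos_iff.2 this
  -- tube lemma
  have hNopen : IsOpen {q : ℂ × ℂ | ‖F q - F (x₀, q.2)‖ < m / 2} := by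
    have hc : Continuous fun q : ℂ × ℂ => ‖F q - F (x₀, q.2)‖ :=
      ((hF.continuous.sub (hF.continuous.comp
        ((continuous_const.prodMk continuous_snd)))).norm)
    exact isOpen_lt hc continuous_const
  have hsub : ({x₀} : Set ℂ) ×ˢ sphere y₀ r ⊆ {q : ℂ × ℂ | ‖F q - F (x₀, q.2)‖ < m / 2} := by
    rintro ⟨a, b⟩ ⟨ha, hb⟩
    simp only [Set.mem_singleton_iff] at ha
    subst ha
    simp [Set.mem_setOf_eq, hg, half_pos hm0]
  obtain ⟨u, v, hu, hv, hxu, hsv, huv⟩ := generalized_tube_lemma isCompact_singleton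
    (isCompact_sphere y₀ r) hNopen hsub
  -- the neighborhood of x₀
  have hW : (u ∩ ball x₀ (ε / 2) ∩ {x : ℂ | ‖F (x, y₀)‖ < m / 2}) ∈ nhds x₀ := by
    refine ((hu.inter isOpen_ball).inter ?_).mem_nhds ?_
    · exact isOpen_lt ((hF.continuous.comp
        (continuous_id.prodMk continuous_const)).norm) continuous_const
    · refine ⟨⟨hxu rfl, mem_ball_self (by linarith)⟩, ?_⟩
      simp [Set.mem_setOf_eq, h0, half_pos hm0]
  filter_upwards [hW] with x hx
  obtain ⟨⟨hxu', hxb⟩, hxsmall⟩ := hx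
  -- claim: a zero in the closed ball
  have hzero : ∃ y ∈ closedBall y₀ r, F (x, y) = 0 := by
    by_contra hc
    push_neg at hc
    have hmin : ∀ z ∈ sphere y₀ r, ‖(F (x, z))⁻¹‖ ≤ (m / 2)⁻¹ := by
      intro z hz
      have h1 : ‖F (x, z) - g z‖ < m / 2 := huv ⟨hxu', hsv hz⟩
      have h2 : m ≤ ‖g z‖ := hymmin hz
      have h3 : m / 2 ≤ ‖F (x, z)‖ := by
        have := norm_sub_norm_le (F (x, z)) (g z)
        have h4 := norm_sub_rev (F (x, z)) (g z)
        nlinarith [norm_sub_norm_le (g z) (F (x, z)), norm_nonneg (F (x,z) - g z)]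
      rw [norm_inv]
      exact inv_anti₀ (half_pos hm0) h3
    have hdc : DiffContOnCl ℂ (fun y => (F (x, y))⁻¹) (ball y₀ r) := by
      have hd : Differentiable ℂ fun y => F (x, y) :=
        hF.comp ((differentiable_const x).prodMk differentiable_id)
      refine ⟨DifferentiableOn.inv hd.differentiableOn ?_, ?_⟩
      · intro y hy
        exact hc y (ball_subset_closedBall hy)
      · rw [closure_ball y₀ hr.ne']
        exact ContinuousOn.inv₀ hd.continuous.continuousOn fun y hy => hc y hy
    have := Complex.norm_le_of_forall_mem_frontier_norm_le isBounded_ball hdc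
      (C := (m/2)⁻¹) (by rwa [frontier_ball y₀ hr.ne']) (z := y₀)
      (by rw [closure_ball y₀ hr.ne']; exact mem_closedBall_self hr.le)
    rw [norm_inv] at this
    have h5 : F (x, y₀) ≠ 0 := hc y₀ (mem_closedBall_self hr.le)
    have h6 : 0 < ‖F (x, y₀)‖ := norm_pos_iff.2 h5
    have h7 : m / 2 ≤ ‖F (x, y₀)‖ := by
      rw [inv_le_inv₀ (by positivity) (half_pos hm0)] at this
      exact this
    exact absurd hxsmall (by simp only [Set.mem_setOf_eq]; linarith)
  obtain ⟨y, hy, hFy⟩ := hzero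
  refine ⟨y, hball ?_, hFy⟩
  rw [mem_ball, Prod.dist_eq]
  rw [mem_closedBall] at hy
  rw [mem_ball] at hxb
  exact max_lt (by linarith) (by linarith)

theorem stmt_10 (f : MvPolynomial (Fin 2) ℂ) (hf : ¬ ∃ c : ℂ, f = MvPolynomial.C c) :
    ∀ p ∈ {q : ℂ × ℂ | MvPolynomial.eval (fun i : Fin 2 => if i = 0 then q.1 else q.2) f = 0},
      ¬ Bornology.IsBounded (connectedComponentIn
        {q : ℂ × ℂ | MvPolynomial.eval (fun i : Fin 2 => if i = 0 then q.1 else q.2) f = 0}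
        p) := by
  intro p hp hbdd
  set F : ℂ × ℂ → ℂ := fun q =>
    MvPolynomial.eval (fun i : Fin 2 => if i = 0 then q.1 else q.2) f with hFdef
  have hFd : Differentiable ℂ F := aux_diff f
  set Z : Set (ℂ × ℂ) := {q : ℂ × ℂ | F q = 0} with hZdef
  have hZc : IsClosed Z := isClosed_eq hFd.continuous continuous_const
  set K := connectedComponentIn Z p with hKdef
  have hpK : p ∈ K := mem_connectedComponentIn hp
  obtain ⟨R₀, hR₀⟩ := hbdd.subset_closedBall (0 : ℂ × ℂ)
  set R : ℝ := max R₀ 0 + 1 with hRdef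
  have hRpos : 0 < R := by positivity
  have hR1 : 1 ≤ R := by simp [hRdef]
  have hKR : K ⊆ ball 0 R := fun z hz => by
    have := hR₀ hz
    rw [mem_closedBall] at this
    rw [mem_ball]
    calc dist z 0 ≤ R₀ := this
      _ ≤ max R₀ 0 := le_max_left _ _
      _ < R := by simp [hRdef]
  set Z' : Set (ℂ × ℂ) := Z ∩ closedBall 0 R with hZ'def
  have hZ'comp : IsCompact Z' := (isCompact_closedBall _ _).inter_left hZc
  have hKZ' : K ⊆ Z' := fun z hz =>
    ⟨connectedComponentIn_subset Z p hz, ball_subset_closedBall (hKR hz)⟩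
  have hKeq : K = connectedComponentIn Z' p := by
    refine le_antisymm ?_ (connectedComponentIn_mono p inter_subset_left)
    exact (isPreconnected_connectedComponentIn).subset_connectedComponentIn hpK hKZ'
  haveI : CompactSpace ↥Z' := isCompact_iff_compactSpace.mp hZ'comp
  have hpZ' : p ∈ Z' := hKZ' hpK
  set p' : ↥Z' := ⟨p, hpZ'⟩ with hp'def
  have hcompK : K = Subtype.val '' connectedComponent p' := by
    rw [hKeq, connectedComponentIn_eq_image hpZ']
  have hsubU : connectedComponent p' ⊆ Subtype.val ⁻¹' (ball (0 : ℂ × ℂ) R) := by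
    intro z hz
    exact hKR (hcompK ▸ ⟨z, hz, rfl⟩)
  obtain ⟨Ct, hCt, hpCt, hCtU⟩ := aux_clopen p'
    (isOpen_ball.preimage continuous_subtype_val) hsubU
  set C : Set (ℂ × ℂ) := Subtype.val '' Ct with hCdef
  have hCcomp : IsCompact C := (hCt.isClosed.isCompact).image continuous_subtype_val
  have hCclosed : IsClosed C := hCcomp.isClosed
  have hCball : C ⊆ ball 0 R := by
    rintro z ⟨w, hw, rfl⟩
    exact hCtU hw
  have hCZ : C ⊆ Z := by
    rintro z ⟨w, hw, rfl⟩
    exact w.2.1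
  have hpC : p ∈ C := ⟨p', hpCt, rfl⟩
  obtain ⟨O, hOopen, hOeq⟩ := isOpen_induced_iff.mp hCt.isOpen
  set Vo : Set (ℂ × ℂ) := O ∩ ball 0 R with hVodef
  have hVoopen : IsOpen Vo := hOopen.inter isOpen_ball
  have hCeq : C = Z ∩ Vo := by
    ext z
    constructor
    · rintro ⟨w, hw, rfl⟩
      refine ⟨w.2.1, ?_, hCtU hw⟩
      · have : w ∈ Subtype.val ⁻¹' O := hOeq ▸ hw
        exact this
    · rintro ⟨hzZ, hzO, hzB⟩
      have hzZ' : z ∈ Z' := ⟨hzZ, ball_subset_closedBall hzB⟩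
      refine ⟨⟨z, hzZ'⟩, ?_, rfl⟩
      rw [← hOeq]
      exact hzO
  set S : Set ℂ := Prod.fst '' C with hSdef
  have hSne : S.Nonempty := ⟨p.1, p, hpC, rfl⟩
  have hScomp : IsCompact S := hCcomp.image continuous_fst
  have hSopen : IsOpen S := by
    rw [isOpen_iff_mem_nhds]
    rintro x₀ ⟨q, hqC, rfl⟩
    by_cases hA : ∀ y : ℂ, F (q.1, y) = 0
    · exfalso
      set L : Set (ℂ × ℂ) := (fun y : ℂ => (q.1, y)) '' univ with hLdef
      have hLpre : IsPreconnected L :=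
        isPreconnected_univ.image _ (Continuous.continuousOn (by fun_prop))
      have hLZ : L ⊆ Z := by
        rintro z ⟨y, -, rfl⟩
        exact hA y
      have hLC : L ⊆ C := aux_relclopen hLpre hLZ hVoopen hCeq hCclosed
        ⟨q, ⟨q.2, mem_univ _, rfl⟩, hqC⟩
      have hmem : (q.1, (R : ℂ)) ∈ ball (0 : ℂ × ℂ) R := hCball (hLC ⟨R, mem_univ _, rfl⟩)
      rw [mem_ball, Prod.dist_eq] at hmem
      have : dist ((R : ℝ) : ℂ) (0 : ℂ) = R := by
        rw [Complex.dist_eq]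
        simp [abs_of_pos hRpos]
      have := le_max_right (dist (q.1) (0:ℂ)) (dist ((R:ℝ):ℂ) (0:ℂ))
      simp only [Prod.fst_zero, Prod.snd_zero] at hmem
      nlinarith [hmem, this]
    · push_neg at hA
      obtain ⟨y₁, hy₁⟩ := hA
      have h0 : F (q.1, q.2) = 0 := hCZ hqC
      have hqVo : (q.1, q.2) ∈ Vo := by
        have := hCeq ▸ hqC
        exact this.2
      have hev := aux_key hFd h0 hy₁ hVoopen hqVo
      refine Filter.mem_of_superset hev ?_
      rintro x ⟨y, hyV, hyF⟩
      exact ⟨(x, y), hCeq ▸ ⟨hyF, hyV⟩, rfl⟩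
  have hSuniv : S = univ := IsClopen.eq_univ ⟨hScomp.isClosed, hSopen⟩ hSne
  have hmem : ((R : ℝ) : ℂ) ∈ S := hSuniv ▸ mem_univ _
  obtain ⟨q, hqC, hq1⟩ := hmem
  have h1 : dist q 0 < R := mem_ball.1 (hCball hqC)
  rw [Prod.dist_eq] at h1
  simp only [Prod.fst_zero, Prod.snd_zero] at h1
  have h2 : dist q.1 (0 : ℂ) = R := by
    rw [hq1, Complex.dist_eq]
    simp [abs_of_pos hRpos]
  have := le_max_left (dist q.1 (0:ℂ)) (dist q.2 (0:ℂ))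
  nlinarith
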